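/- For all real numbers 0 ≤ m₀ ≤ m₁ and every natural number k ≥ 1, 1 − e^{−(m₁−m₀)} ≥ (1/(k−1)!)·∫_{m₀}^{m₁} t^{k−1} e^{−t} dt. -/

import Mathlib

lemma deriv_aux (n : ℕ) (t : ℝ) :
    HasDerivAt (fun x : ℝ => -((n.factorial : ℝ) *
        (Real.exp (-x) * ∑ j ∈ Finset.range (n+1), x ^ j / j.factorial)))
      (t ^ n * Real.exp (-t)) t := by
  have h1 : HasDerivAt (fun x : ℝ => Real.exp (-x)) (-Real.exp (-t)) t := by
    simpa using (hasDerivAt_neg t).exp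
  have h2 : HasDerivAt (fun x : ℝ => ∑ j ∈ Finset.range (n+1), x ^ j / j.factorial)
      (∑ j ∈ Finset.range n, t ^ j / j.factorial) t := by
    have h3 : HasDerivAt (fun x : ℝ => ∑ j ∈ Finset.range (n+1), x ^ j / j.factorial)
        (∑ j ∈ Finset.range (n+1), (j : ℝ) * t ^ (j-1) / j.factorial) t :=
      HasDerivAt.fun_sum fun j _ => (hasDerivAt_pow j t).div_const _
    convert h3 using 1
    rw [Finset.sum_range_succ']
    simp only [Nat.cast_zero, zero_mul, zero_div, add_zero]
    apply Finset.sum_congr rfl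
    intro i _
    have hi : ((i : ℝ) + 1) ≠ 0 := by positivity
    have hfi : ((i.factorial : ℝ)) ≠ 0 := Nat.cast_ne_zero.2 i.factorial_ne_zero
    rw [Nat.factorial_succ]
    push_cast
    field_simp
  have h4 := ((h1.mul h2).const_mul ((n.factorial : ℝ))).neg
  refine h4.congr_deriv ?_
  rw [Finset.sum_range_succ]
  have hf : ((n.factorial : ℝ)) ≠ 0 := Nat.cast_ne_zero.2 n.factorial_ne_zero
  field_simp
  ring

/-- The key inequality: `1 - e^{-(m₁-m₀)}` dominates the difference of regularized upper
incomplete Gamma functions. -/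
theorem one_sub_exp_ge_gamma_integral (m₀ m₁ : ℝ) (hm₀ : 0 ≤ m₀) (hm : m₀ ≤ m₁)
    (k : ℕ) (hk : 1 ≤ k) :
    1 - Real.exp (-(m₁ - m₀)) ≥
      (1 / (Nat.factorial (k - 1))) * ∫ t in m₀..m₁, t ^ (k - 1) * Real.exp (-t) := by
  set n := k - 1 with hn
  set S : ℝ → ℝ := fun x => ∑ j ∈ Finset.range (n+1), x ^ j / j.factorial with hS
  have hf : (0:ℝ) < n.factorial := by positivity
  have hint : (∫ t in m₀..m₁, t ^ n * Real.exp (-t)) =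
      (n.factorial : ℝ) * (Real.exp (-m₀) * S m₀) -
        (n.factorial : ℝ) * (Real.exp (-m₁) * S m₁) := by
    have hI := intervalIntegral.integral_eq_sub_of_hasDerivAt
      (f := fun x : ℝ => -((n.factorial : ℝ) * (Real.exp (-x) * S x)))
      (fun t _ => deriv_aux n t)
      (Continuous.intervalIntegrable (by continuity) m₀ m₁)
    rw [hI]; ring
  have hS0 : S m₀ ≤ Real.exp m₀ := Real.sum_le_exp_of_nonneg hm₀ _
  have hS01 : S m₀ ≤ S m₁ := by
    apply Finset.sum_le_sum
    intro j _
    gcongr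
  have key : Real.exp m₀ - S m₁ ≤ Real.exp (m₁ - m₀) * (Real.exp m₀ - S m₀) := by
    have h2 : Real.exp m₀ - S m₀ ≤ Real.exp (m₁ - m₀) * (Real.exp m₀ - S m₀) :=
      le_mul_of_one_le_left (by linarith) (Real.one_le_exp (by linarith))
    linarith
  have e1 : Real.exp (-m₁) * Real.exp m₀ = Real.exp (m₀ - m₁) := by
    rw [← Real.exp_add]; ring_nf
  have e2 : Real.exp (-m₁) * Real.exp (m₁ - m₀) = Real.exp (-m₀) := by
    rw [← Real.exp_add]; ring_nf
  have e3 : Real.exp (-m₀) * Real.exp m₀ = 1 := by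
    rw [← Real.exp_add]; simp
  have final : Real.exp (-m₀) * S m₀ - Real.exp (-m₁) * S m₁ ≤ 1 - Real.exp (m₀ - m₁) := by
    have h3 := mul_le_mul_of_nonneg_left key (Real.exp_pos (-m₁)).le
    rw [← mul_assoc, e2, mul_sub, mul_sub, e3, e1] at h3
    linarith
  rw [ge_iff_le, hint, neg_sub]
  have heq : (1 / ((n.factorial : ℝ))) *
      ((n.factorial : ℝ) * (Real.exp (-m₀) * S m₀) -
        (n.factorial : ℝ) * (Real.exp (-m₁) * S m₁)) =
      Real.exp (-m₀) * S m₀ - Real.exp (-m₁) * S m₁ := by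
    field_simp
  rw [heq]
  exact final
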